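/- Let ρ∞(b) = ∫_0^1 exp(-2∑_{j=1}^b (1 - y^j)/j) dy. Then b · ρ∞(b) = ∫_0^b exp(-2∫_0^u (1 - (1 - x/b)^b)/x dx) du for every integer b ≥ 1, and b · ρ∞(b) → ∫_0^∞ exp(-2∫_0^u (1 - e^{-x})/x dx) du as b → ∞. -/

import Mathlib

open Finset Filter MeasureTheory intervalIntegral

/-- The jamming limit of the Rydberg RSA model with blockade range `b`. -/
noncomputable def rhoInf (b : ℕ) : ℝ :=
  ∫ y in (0 : ℝ)..1, Real.exp (-2 * ∑ j ∈ Finset.Icc 1 b, (1 - y ^ j) / (j : ℝ))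

/-- `(1 - (1 - x/b)^b)/x`, extended continuously at `x = 0` by the value `1`. -/
noncomputable def gb (b : ℕ) (x : ℝ) : ℝ :=
  if x = 0 then 1 else (1 - (1 - x / (b : ℝ)) ^ b) / x

/-- `(1 - e^{-x})/x`, extended continuously at `x = 0` by the value `1`. -/
noncomputable def hfun (x : ℝ) : ℝ :=
  if x = 0 then 1 else (1 - Real.exp (-x)) / x

lemma gb_eq_poly {b : ℕ} (hb : 1 ≤ b) (x : ℝ) :
    gb b x = (∑ j ∈ Finset.range b, (1 - x / (b : ℝ)) ^ j) / b := by
  have hb0 : (b : ℝ) ≠ 0 := Nat.cast_ne_zero.2 (by omega)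
  unfold gb
  rcases eq_or_ne x 0 with h | h
  · simp [h, div_self hb0]
  · rw [if_neg h]
    have ht : (1 - x / (b:ℝ)) ≠ 1 := by
      intro hc
      apply h
      have : x / (b:ℝ) = 0 := by linarith
      field_simp at this
      simpa using this
    rw [geom_sum_eq ht]
    rw [div_div, show (1 - x / (b:ℝ) - 1) * b = -x by
      rw [sub_sub_cancel_left, neg_mul, div_mul_cancel₀ x hb0]]
    rw [div_neg, ← neg_div, neg_sub]

lemma gb_continuous {b : ℕ} (hb : 1 ≤ b) : Continuous (gb b) := by
  have : gb b = fun x => (∑ j ∈ Finset.range b, (1 - x / (b : ℝ)) ^ j) / b :=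
    funext (gb_eq_poly hb)
  rw [this]
  fun_prop

lemma gb_nonneg {b : ℕ} (hb : 1 ≤ b) {x : ℝ} (hx0 : 0 ≤ x) (hxb : x ≤ b) :
    0 ≤ gb b x := by
  have hb0 : (0:ℝ) < b := by exact_mod_cast Nat.pos_of_ne_zero (by omega)
  rw [gb_eq_poly hb]
  apply div_nonneg _ hb0.le
  apply Finset.sum_nonneg
  intro j _
  apply pow_nonneg
  rw [sub_nonneg, div_le_one hb0]
  exact hxb

lemma gb_le_one {b : ℕ} (hb : 1 ≤ b) {x : ℝ} (hx0 : 0 ≤ x) (hxb : x ≤ b) :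
    gb b x ≤ 1 := by
  have hb0 : (0:ℝ) < b := by exact_mod_cast Nat.pos_of_ne_zero (by omega)
  rw [gb_eq_poly hb, div_le_one hb0]
  calc ∑ j ∈ Finset.range b, (1 - x / (b:ℝ)) ^ j
      ≤ ∑ j ∈ Finset.range b, 1 := by
        apply Finset.sum_le_sum
        intro j _
        apply pow_le_one₀
        · rw [sub_nonneg, div_le_one hb0]; exact hxb
        · have : 0 ≤ x / (b:ℝ) := div_nonneg hx0 hb0.le
          linarith
    _ = b := by simp

lemma hfun_nonneg {x : ℝ} (hx : 0 ≤ x) : 0 ≤ hfun x := by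
  unfold hfun
  rcases eq_or_ne x 0 with h | h
  · simp [h]
  · rw [if_neg h]
    have hx' : 0 < x := lt_of_le_of_ne hx (Ne.symm h)
    apply div_nonneg _ hx'.le
    have : Real.exp (-x) ≤ 1 := Real.exp_le_one_iff.2 (by linarith)
    linarith

lemma hfun_le_one {x : ℝ} (hx : 0 ≤ x) : hfun x ≤ 1 := by
  unfold hfun
  rcases eq_or_ne x 0 with h | h
  · simp [h]
  · rw [if_neg h]
    have hx' : 0 < x := lt_of_le_of_ne hx (Ne.symm h)
    rw [div_le_one hx']
    have := Real.add_one_le_exp (-x)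
    linarith

lemma hfun_le_gb {b : ℕ} (hb : 1 ≤ b) {x : ℝ} (hx0 : 0 ≤ x) (hxb : x ≤ b) :
    hfun x ≤ gb b x := by
  have hb0 : (0:ℝ) < b := by exact_mod_cast Nat.pos_of_ne_zero (by omega)
  rcases eq_or_ne x 0 with h | h
  · simp [hfun, gb, h]
  · have hx' : 0 < x := lt_of_le_of_ne hx0 (Ne.symm h)
    rw [hfun, gb, if_neg h, if_neg h, div_le_div_iff_of_pos_right hx']
    have key : (1 - x / (b:ℝ)) ^ b ≤ Real.exp (-x) := by
      have h1 : 1 - x / (b:ℝ) ≤ Real.exp (-(x / b)) := by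
        have := Real.add_one_le_exp (-(x / (b:ℝ))); linarith
      have h0 : 0 ≤ 1 - x / (b:ℝ) := by
        rw [sub_nonneg, div_le_one hb0]; exact hxb
      calc (1 - x / (b:ℝ)) ^ b ≤ Real.exp (-(x / b)) ^ b := pow_le_pow_left₀ h0 h1 b
        _ = Real.exp (-x) := by
            rw [← Real.exp_nat_mul]
            congr 1
            field_simp
    linarith


lemma integral_gb {b : ℕ} (hb : 1 ≤ b) (u : ℝ) :
    ∫ x in (0:ℝ)..u, gb b x = ∑ j ∈ Finset.Icc 1 b, (1 - (1 - u / b) ^ j) / (j : ℝ) := by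
  have hb0 : (b : ℝ) ≠ 0 := Nat.cast_ne_zero.2 (by omega)
  have key : ∀ t : ℝ, HasDerivAt
      (fun y => ∑ j ∈ Finset.Icc 1 b, (1 - (1 - y / b) ^ j) / (j : ℝ)) (gb b t) t := by
    intro t
    have term : ∀ j ∈ Finset.Icc 1 b, HasDerivAt
        (fun y : ℝ => (1 - (1 - y / (b:ℝ)) ^ j) / (j : ℝ))
        ((1 - t / (b:ℝ)) ^ (j - 1) / b) t := by
      intro j hj
      simp only [Finset.mem_Icc] at hj
      have hj0 : (j : ℝ) ≠ 0 := Nat.cast_ne_zero.2 (by omega)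
      have h1 : HasDerivAt (fun y : ℝ => 1 - y / (b:ℝ)) (-(1 / b)) t := by
        simpa using ((hasDerivAt_id t).div_const (b:ℝ)).const_sub 1
      have h2 := ((h1.pow j).const_sub 1).div_const (j : ℝ)
      refine h2.congr_deriv ?_
      field_simp
    have hsum := HasDerivAt.fun_sum term
    refine hsum.congr_deriv ?_
    rw [gb_eq_poly hb]
    rw [← Finset.Ico_add_one_right_eq_Icc, Finset.sum_Ico_eq_sum_range, Finset.sum_div]
    simp
  rw [intervalIntegral.integral_eq_sub_of_hasDerivAt (fun t _ => key t)
    ((gb_continuous hb).intervalIntegrable _ _)]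
  simp

lemma part1 (b : ℕ) (hb : 1 ≤ b) :
    (b : ℝ) * rhoInf b =
      ∫ u in (0 : ℝ)..(b : ℝ), Real.exp (-2 * ∫ x in (0 : ℝ)..u, gb b x) := by
  have hb0 : (b : ℝ) ≠ 0 := Nat.cast_ne_zero.2 (by omega)
  simp only [integral_gb hb]
  have h1 := intervalIntegral.integral_comp_div (a := (0:ℝ)) (b := (b:ℝ)) (c := (b:ℝ))
    (f := fun t => Real.exp (-2 * ∑ j ∈ Finset.Icc 1 b, (1 - (1 - t) ^ j) / (j : ℝ))) hb0
  simp only [zero_div, div_self hb0] at h1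
  rw [h1]
  have h2 := intervalIntegral.integral_comp_sub_left (a := (0:ℝ)) (b := 1)
    (fun y => Real.exp (-2 * ∑ j ∈ Finset.Icc 1 b, (1 - y ^ j) / (j : ℝ))) 1
  simp only [sub_self, sub_zero] at h2
  rw [h2, rhoInf, smul_eq_mul]


lemma hfun_measurable : Measurable hfun := by
  unfold hfun
  apply Measurable.ite
  · exact measurableSet_eq
  · exact measurable_const
  · exact (measurable_const.sub (Real.measurable_exp.comp measurable_neg)).div measurable_id

lemma hfun_intInt {a u : ℝ} (ha : 0 ≤ a) (hau : a ≤ u) :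
    IntervalIntegrable hfun MeasureTheory.volume a u := by
  rw [intervalIntegrable_iff_integrableOn_Ioc_of_le hau]
  apply Integrable.mono' (g := fun _ : ℝ => (1:ℝ))
  · exact integrableOn_const measure_Ioc_lt_top.ne
  · exact hfun_measurable.aestronglyMeasurable.restrict
  · rw [ae_restrict_iff' measurableSet_Ioc]
    filter_upwards with x hx
    have hx0 : 0 ≤ x := le_trans ha hx.1.le
    rw [Real.norm_eq_abs, abs_le]
    exact ⟨by linarith [hfun_nonneg hx0], hfun_le_one hx0⟩

lemma integral_hfun_nonneg {u : ℝ} (hu : 0 ≤ u) : 0 ≤ ∫ x in (0:ℝ)..u, hfun x :=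
  intervalIntegral.integral_nonneg hu fun x hx => hfun_nonneg hx.1

lemma integral_hfun_ge_log {u : ℝ} (hu : 1 ≤ u) :
    (1 - Real.exp (-1)) * Real.log u ≤ ∫ x in (0:ℝ)..u, hfun x := by
  have h01 : IntervalIntegrable hfun MeasureTheory.volume 0 1 := hfun_intInt le_rfl zero_le_one
  have h1u : IntervalIntegrable hfun MeasureTheory.volume 1 u := hfun_intInt zero_le_one hu
  have hsplit : ∫ x in (0:ℝ)..u, hfun x =
      (∫ x in (0:ℝ)..1, hfun x) + ∫ x in (1:ℝ)..u, hfun x :=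
    (intervalIntegral.integral_add_adjacent_intervals h01 h1u).symm
  have h0 : 0 ≤ ∫ x in (0:ℝ)..1, hfun x := integral_hfun_nonneg zero_le_one
  have hc : IntervalIntegrable (fun x : ℝ => (1 - Real.exp (-1)) * (1 / x))
      MeasureTheory.volume 1 u := by
    apply ContinuousOn.intervalIntegrable
    apply ContinuousOn.mul continuousOn_const
    apply ContinuousOn.div continuousOn_const continuousOn_id
    intro x hx
    rw [Set.uIcc_of_le hu] at hx
    intro h
    simp only [id_eq] at h
    rw [h] at hx; norm_num at hx
  have hmono : ∫ x in (1:ℝ)..u, (1 - Real.exp (-1)) * (1 / x) ≤ ∫ x in (1:ℝ)..u, hfun x := by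
    apply intervalIntegral.integral_mono_on hu hc h1u
    intro x hx
    have hx1 : (1:ℝ) ≤ x := hx.1
    have hx0 : (0:ℝ) < x := by linarith
    have hxne : x ≠ 0 := hx0.ne'
    rw [hfun, if_neg hxne, mul_one_div, div_le_div_iff_of_pos_right hx0]
    have : Real.exp (-x) ≤ Real.exp (-1) := Real.exp_le_exp.2 (by linarith)
    linarith
  have hval : ∫ x in (1:ℝ)..u, (1 - Real.exp (-1)) * (1 / x)
      = (1 - Real.exp (-1)) * Real.log u := by
    rw [intervalIntegral.integral_const_mul, integral_one_div]
    · norm_num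
    · intro h
      rw [Set.uIcc_of_le hu] at h
      exact absurd h.1 (by norm_num)
  linarith [hmono, hval ▸ hmono]


noncomputable def bfun (u : ℝ) : ℝ :=
  Set.indicator (Set.Ioc 0 1) (fun _ => (1:ℝ)) u +
    Set.indicator (Set.Ioi 1) (fun u => u ^ (-(2 * (1 - Real.exp (-1))))) u

lemma one_lt_cExp : 1 < 2 * (1 - Real.exp (-1)) := by
  have h2 : (2:ℝ) < Real.exp 1 := by
    have := Real.exp_one_gt_d9; linarith
  have : Real.exp (-1) < 1/2 := by
    rw [Real.exp_neg]
    rw [inv_lt_comm₀ (by positivity) (by norm_num)]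
    linarith
  linarith

lemma bfun_nonneg (u : ℝ) : 0 ≤ bfun u := by
  apply add_nonneg
  · exact Set.indicator_nonneg (fun _ _ => zero_le_one) u
  · exact Set.indicator_nonneg (fun x hx => Real.rpow_nonneg (by
      have : (1:ℝ) < x := hx; linarith) _) u

lemma bfun_integrable : Integrable bfun (MeasureTheory.volume.restrict (Set.Ioi (0:ℝ))) := by
  apply Integrable.restrict
  apply Integrable.add
  · exact (integrableOn_const measure_Ioc_lt_top.ne).integrable_indicator
      measurableSet_Ioc
  · exact (integrableOn_Ioi_rpow_of_lt (by linarith [one_lt_cExp]) one_pos).integrable_indicator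
      measurableSet_Ioi

lemma H_le_bfun {u : ℝ} (hu : 0 < u) :
    Real.exp (-2 * ∫ x in (0:ℝ)..u, hfun x) ≤ bfun u := by
  rcases le_or_gt u 1 with h1 | h1
  · have hmem : u ∈ Set.Ioc (0:ℝ) 1 := ⟨hu, h1⟩
    have : Real.exp (-2 * ∫ x in (0:ℝ)..u, hfun x) ≤ 1 := by
      rw [Real.exp_le_one_iff]
      have := integral_hfun_nonneg hu.le
      linarith
    calc Real.exp (-2 * ∫ x in (0:ℝ)..u, hfun x) ≤ 1 := this
      _ ≤ bfun u := by
          unfold bfun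
          rw [Set.indicator_of_mem hmem]
          have : 0 ≤ Set.indicator (Set.Ioi 1) (fun u : ℝ => u ^ (-(2 * (1 - Real.exp (-1))))) u :=
            Set.indicator_nonneg (fun x hx => Real.rpow_nonneg (by
              have : (1:ℝ) < x := hx; linarith) _) u
          linarith
  · have hmem : u ∈ Set.Ioi (1:ℝ) := h1
    have hnot : u ∉ Set.Ioc (0:ℝ) 1 := fun h => absurd h.2 (not_le.2 h1)
    unfold bfun
    rw [Set.indicator_of_notMem hnot, Set.indicator_of_mem hmem, zero_add]
    rw [Real.rpow_def_of_pos hu, Real.exp_le_exp]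
    have hlog : 0 ≤ Real.log u := Real.log_nonneg h1.le
    have := integral_hfun_ge_log h1.le
    nlinarith

lemma tendsto_integral_gb {u : ℝ} (hu : 0 < u) :
    Tendsto (fun b : ℕ => ∫ x in (0:ℝ)..u, gb b x) atTop
      (nhds (∫ x in (0:ℝ)..u, hfun x)) := by
  apply intervalIntegral.tendsto_integral_filter_of_dominated_convergence (fun _ => (1:ℝ))
  · filter_upwards [eventually_ge_atTop 1] with b hb
    exact (gb_continuous hb).aestronglyMeasurable.restrict
  · filter_upwards [eventually_ge_atTop (max 1 ⌈u⌉₊)] with b hb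
    apply Eventually.of_forall
    intro x hx
    rw [Set.uIoc_of_le hu.le] at hx
    have hb1 : 1 ≤ b := le_trans (le_max_left _ _) hb
    have hub : u ≤ (b:ℝ) := le_trans (Nat.le_ceil u)
      (by exact_mod_cast le_trans (le_max_right 1 ⌈u⌉₊) hb)
    have hx0 : 0 ≤ x := hx.1.le
    have hxb : x ≤ (b:ℝ) := hx.2.trans hub
    rw [Real.norm_eq_abs, abs_le]
    exact ⟨by linarith [gb_nonneg hb1 hx0 hxb], gb_le_one hb1 hx0 hxb⟩
  · exact intervalIntegrable_const
  · apply Eventually.of_forall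
    intro x hx
    rw [Set.uIoc_of_le hu.le] at hx
    have hxne : x ≠ 0 := hx.1.ne'
    have base := Real.tendsto_one_add_div_pow_exp (-x)
    have h2 : Tendsto (fun b : ℕ => (1 - (1 + (-x)/(b:ℝ))^b)/x) atTop
        (nhds ((1 - Real.exp (-x))/x)) := (base.const_sub 1).div_const x
    have heq : ∀ b : ℕ, (1 - (1 + (-x)/(b:ℝ))^b)/x = gb b x := by
      intro b
      rw [gb, if_neg hxne, neg_div, ← sub_eq_add_neg]
    rw [hfun, if_neg hxne]
    exact h2.congr heq

lemma part2 : Tendsto (fun b : ℕ => (b:ℝ) * rhoInf b) atTop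
    (nhds (∫ u in Set.Ioi (0:ℝ), Real.exp (-2 * ∫ x in (0:ℝ)..u, hfun x))) := by
  set F : ℕ → ℝ → ℝ := fun b u =>
    Set.indicator (Set.Ioc (0:ℝ) (b:ℝ))
      (fun u => Real.exp (-2 * ∫ x in (0:ℝ)..u, gb b x)) u with hF
  have hmain : Tendsto (fun b : ℕ => ∫ u in Set.Ioi (0:ℝ), F b u) atTop
      (nhds (∫ u in Set.Ioi (0:ℝ), Real.exp (-2 * ∫ x in (0:ℝ)..u, hfun x))) := by
    apply MeasureTheory.tendsto_integral_filter_of_dominated_convergence bfun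
    · filter_upwards [eventually_ge_atTop 1] with b hb
      have hcont : Continuous fun u : ℝ => Real.exp (-2 * ∫ x in (0:ℝ)..u, gb b x) := by
        apply Real.continuous_exp.comp
        apply Continuous.mul continuous_const
        exact intervalIntegral.continuous_primitive
          (fun a c => (gb_continuous hb).intervalIntegrable a c) 0
      exact (hcont.aestronglyMeasurable.indicator measurableSet_Ioc).restrict
    · filter_upwards [eventually_ge_atTop 1] with b hb
      rw [ae_restrict_iff' measurableSet_Ioi]
      filter_upwards with u hu
      by_cases hmem : u ∈ Set.Ioc (0:ℝ) ((b:ℕ):ℝ)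
      · simp only [hF, Set.indicator_of_mem hmem]
        rw [Real.norm_eq_abs, abs_of_pos (Real.exp_pos _)]
        have hu0 : (0:ℝ) < u := hu
        have hint : (∫ x in (0:ℝ)..u, hfun x) ≤ ∫ x in (0:ℝ)..u, gb b x := by
          apply intervalIntegral.integral_mono_on hu0.le (hfun_intInt le_rfl hu0.le)
            ((gb_continuous hb).intervalIntegrable 0 u)
          intro x hx
          exact hfun_le_gb hb hx.1 (hx.2.trans hmem.2)
        calc Real.exp (-2 * ∫ x in (0:ℝ)..u, gb b x)
            ≤ Real.exp (-2 * ∫ x in (0:ℝ)..u, hfun x) := by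
              rw [Real.exp_le_exp]; linarith
          _ ≤ bfun u := H_le_bfun hu0
      · simp only [hF, Set.indicator_of_notMem hmem, norm_zero]
        exact bfun_nonneg u
    · exact bfun_integrable
    · rw [ae_restrict_iff' measurableSet_Ioi]
      filter_upwards with u hu
      have hu0 : (0:ℝ) < u := hu
      have h1 : Tendsto (fun b : ℕ => Real.exp (-2 * ∫ x in (0:ℝ)..u, gb b x)) atTop
          (nhds (Real.exp (-2 * ∫ x in (0:ℝ)..u, hfun x))) :=
        (Real.continuous_exp.tendsto _).comp ((tendsto_integral_gb hu0).const_mul (-2))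
      apply h1.congr'
      filter_upwards [eventually_ge_atTop ⌈u⌉₊] with b hb
      have hmem : u ∈ Set.Ioc (0:ℝ) ((b:ℕ):ℝ) :=
        ⟨hu0, (Nat.le_ceil u).trans (by exact_mod_cast hb)⟩
      simp only [hF, Set.indicator_of_mem hmem]
  apply Tendsto.congr' _ hmain
  filter_upwards [eventually_ge_atTop 1] with b hb
  have hb0 : (0:ℝ) ≤ (b:ℝ) := Nat.cast_nonneg b
  rw [part1 b hb, intervalIntegral.integral_of_le hb0]
  simp only [hF]
  rw [MeasureTheory.integral_indicator measurableSet_Ioc,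
    Measure.restrict_restrict measurableSet_Ioc,
    Set.inter_eq_self_of_subset_left Set.Ioc_subset_Ioi_self]



/-- For every `b ≥ 1`,
`b·ρ∞(b) = ∫₀ᵇ exp(-2∫₀ᵘ (1 - (1 - x/b)^b)/x dx) du`, and
`b·ρ∞(b) → ∫₀^∞ exp(-2∫₀ᵘ (1 - e^{-x})/x dx) du` (Rényi's parking constant)
as `b → ∞`. -/
theorem stmt12 :
    (∀ b : ℕ, 1 ≤ b →
      (b : ℝ) * rhoInf b =
        ∫ u in (0 : ℝ)..(b : ℝ), Real.exp (-2 * ∫ x in (0 : ℝ)..u, gb b x)) ∧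
    Tendsto (fun b : ℕ => (b : ℝ) * rhoInf b) atTop
      (nhds (∫ u in Set.Ioi (0 : ℝ),
        Real.exp (-2 * ∫ x in (0 : ℝ)..u, hfun x))) := by
  exact ⟨part1, part2⟩
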